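/- arXiv:2508.21387 — 8 statements merged into one kernel-verified Lean document; each statement's English description precedes it below -/
import Mathlib

section
/- The binary operation on B_Z^{F²} = ℤ × ℤ × {[0), [1)} defined by (i₁,j₁,F₁)·(i₂,j₂,F₂) = (i₁−j₁+i₂, j₂, (j₁−i₂+F₁)∩F₂) if j₁ ≤ i₂, and (i₁, j₁−i₂+j₂, F₁∩(i₂−j₁+F₂)) if j₁ ≥ i₂, is associative (note the two cases agree when j₁ = i₂, since both shifts are by 0). -/
/-- Elements of `B_Z^{F²}`: `(i, j, q)` encodes `(i, j, [q))` with `q ∈ {0,1}`. -/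
abbrev BZF : Type := ℤ × ℤ × Fin 2

/-- Convert an integer `v ∈ {0,1}` (value of `max`-computations on ray indices)
back to the index of the ray `[v)`. -/
def famOfInt (v : ℤ) : Fin 2 := if v ≤ 0 then 0 else 1

/-- The semigroup operation on `B_Z^{F²}`: the third coordinates are combined via
shift `n + [a) = [max (a+n) 0)` and intersection `[a) ∩ [b) = [max a b)`. -/
def bzMul (x y : BZF) : BZF :=
  if x.2.1 ≤ y.1 then
    (x.1 - x.2.1 + y.1, y.2.1,
      famOfInt (max (max (((x.2.2 : ℕ) : ℤ) + x.2.1 - y.1) 0) ((y.2.2 : ℕ) : ℤ)))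
  else
    (x.1, x.2.1 - y.1 + y.2.1,
      famOfInt (max ((x.2.2 : ℕ) : ℤ) (max (((y.2.2 : ℕ) : ℤ) + y.1 - x.2.1) 0)))

/-- Endomorphism predicate for maps of `B_Z^{F²}`. -/
def IsHom (e : BZF → BZF) : Prop := ∀ x y : BZF, e (bzMul x y) = bzMul (e x) (e y)

/-- The distinguished idempotent `(0,0,[0))`. -/
def c0 : BZF := (0, 0, 0)

lemma famOfInt_cast (v : ℤ) : ((famOfInt v : ℕ) : ℤ) = if v ≤ 0 then 0 else 1 := by
  unfold famOfInt; split_ifs <;> simp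

lemma famOfInt_congr {v w : ℤ} (h : v ≤ 0 ↔ w ≤ 0) : famOfInt v = famOfInt w := by
  unfold famOfInt; split_ifs with h1 h2 <;> tauto

lemma bzMul_def (i1 j1 : ℤ) (f1 : Fin 2) (i2 j2 : ℤ) (f2 : Fin 2) :
    bzMul (i1, j1, f1) (i2, j2, f2) =
    if j1 ≤ i2 then
      (i1 - j1 + i2, j2, famOfInt (max (max (((f1 : ℕ) : ℤ) + j1 - i2) 0) ((f2 : ℕ) : ℤ)))
    else
      (i1, j1 - i2 + j2, famOfInt (max ((f1 : ℕ) : ℤ) (max (((f2 : ℕ) : ℤ) + i2 - j1) 0))) := rfl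

set_option maxHeartbeats 1000000 in
/-- The operation on `B_Z^{F²}` is associative. -/
theorem bzMul_assoc (x y z : BZF) :
    bzMul (bzMul x y) z = bzMul x (bzMul y z) := by
  obtain ⟨i1, j1, f1⟩ := x
  obtain ⟨i2, j2, f2⟩ := y
  obtain ⟨i3, j3, f3⟩ := z
  have a1 : ((f1 : ℕ) : ℤ) ≤ 1 := by exact_mod_cast Nat.lt_succ_iff.mp f1.isLt
  have a2 : ((f2 : ℕ) : ℤ) ≤ 1 := by exact_mod_cast Nat.lt_succ_iff.mp f2.isLt
  have a3 : ((f3 : ℕ) : ℤ) ≤ 1 := by exact_mod_cast Nat.lt_succ_iff.mp f3.isLt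
  have b1 : (0:ℤ) ≤ ((f1 : ℕ) : ℤ) := Int.ofNat_nonneg _
  have b2 : (0:ℤ) ≤ ((f2 : ℕ) : ℤ) := Int.ofNat_nonneg _
  have b3 : (0:ℤ) ≤ ((f3 : ℕ) : ℤ) := Int.ofNat_nonneg _
  simp only [bzMul_def, apply_ite (fun t => bzMul t (i3, j3, f3)),
    apply_ite (fun t => bzMul (i1, j1, f1) t), bzMul_def, famOfInt_cast]
  split_ifs <;>
    · simp only [Prod.mk.injEq]
      refine ⟨by first | trivial | omega, by first | trivial | omega,
        famOfInt_congr (by simp only [max_le_iff]; omega)⟩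
end

section
/- The semigroup B_Z^{F²} is an inverse semigroup in which the inverse of (i, j, F) is (j, i, F). -/
lemma famOfInt_eq_iff (a b : ℤ) : famOfInt a = famOfInt b ↔ (a ≤ 0 ↔ b ≤ 0) := by
  unfold famOfInt; split_ifs <;> simp_all <;> omega

lemma famOfInt_eq_self (f : Fin 2) (a : ℤ) :
    famOfInt a = f ↔ (a ≤ 0 ↔ ((f : ℕ) : ℤ) ≤ 0) := by
  unfold famOfInt; fin_cases f <;> split_ifs <;> simp_all <;> omega

set_option maxHeartbeats 1000000 in
/-- `B_Z^{F²}` is an inverse semigroup, the inverse of `(i,j,F)` being `(j,i,F)`. -/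
theorem bzf_inverse_semigroup :
    (∀ x y z : BZF, bzMul (bzMul x y) z = bzMul x (bzMul y z)) ∧
    (∀ x : BZF,
      (bzMul (bzMul x (x.2.1, x.1, x.2.2)) x = x ∧
       bzMul (bzMul (x.2.1, x.1, x.2.2) x) (x.2.1, x.1, x.2.2) = (x.2.1, x.1, x.2.2)) ∧
      (∀ y : BZF, bzMul (bzMul x y) x = x → bzMul (bzMul y x) y = y →
        y = (x.2.1, x.1, x.2.2))) := by
  refine ⟨?_, fun x => ⟨⟨?_, ?_⟩, ?_⟩⟩
  · rintro ⟨i1,j1,f1⟩ ⟨i2,j2,f2⟩ ⟨i3,j3,f3⟩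
    have h1 := f1.isLt; have h2 := f2.isLt; have h3 := f3.isLt
    simp only [bzMul, famOfInt_cast, Prod.mk.injEq, famOfInt_eq_iff]
    split_ifs <;>
      simp_all only [Prod.mk.injEq, famOfInt_eq_iff, famOfInt_cast] <;>
      split_ifs <;>
      (try simp_all only [Prod.mk.injEq, famOfInt_eq_iff, famOfInt_cast]) <;>
      (try split_ifs) <;>
      (first
        | omega
        | (simp_all only [sup_le_iff, le_refl, and_true, true_and, iff_true, true_iff, iff_false, false_iff] <;> first | omega | decide))
  · obtain ⟨i,j,f⟩ := x
    have h := f.isLt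
    simp only [bzMul, famOfInt_cast, Prod.mk.injEq, famOfInt_eq_self, famOfInt_eq_iff]
    split_ifs <;>
      simp_all only [Prod.mk.injEq, famOfInt_eq_iff, famOfInt_eq_self, famOfInt_cast] <;>
      split_ifs <;>
      (try simp_all only [Prod.mk.injEq, famOfInt_eq_iff, famOfInt_eq_self, famOfInt_cast]) <;>
      (try split_ifs) <;>
      (first
        | omega
        | (simp_all only [sup_le_iff, le_refl, and_true, true_and, iff_true, true_iff, iff_false, false_iff] <;> first | omega | decide))
  · obtain ⟨i,j,f⟩ := x
    have h := f.isLt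
    simp only [bzMul, famOfInt_cast, Prod.mk.injEq, famOfInt_eq_self, famOfInt_eq_iff]
    split_ifs <;>
      simp_all only [Prod.mk.injEq, famOfInt_eq_iff, famOfInt_eq_self, famOfInt_cast] <;>
      split_ifs <;>
      (try simp_all only [Prod.mk.injEq, famOfInt_eq_iff, famOfInt_eq_self, famOfInt_cast]) <;>
      (try split_ifs) <;>
      (first
        | omega
        | (simp_all only [sup_le_iff, le_refl, and_true, true_and, iff_true, true_iff, iff_false, false_iff] <;> first | omega | decide))
  · rintro ⟨i2,j2,f2⟩ h1 h2
    obtain ⟨i,j,f⟩ := x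
    have ha := f.isLt; have hb := f2.isLt
    simp only [bzMul, famOfInt_cast, Prod.mk.injEq, famOfInt_eq_self, famOfInt_eq_iff]
      at h1 h2 ⊢
    split_ifs at h1 h2 <;>
      (try simp only [Prod.mk.injEq, famOfInt_eq_iff, famOfInt_eq_self, famOfInt_cast] at *) <;>
      (try split_ifs at h1 h2) <;>
      (try simp only [Prod.mk.injEq, famOfInt_eq_iff, famOfInt_eq_self, famOfInt_cast] at *) <;>
      (try split_ifs at h1 h2) <;>
      (try exact ⟨by omega, by omega, by
        (try simp only [famOfInt_eq_iff, famOfInt_eq_self, sup_le_iff] at h1 h2)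
        rw [Fin.ext_iff]; omega⟩)
end

section
/- Fix a positive integer k and p ∈ {0, …, k−1}. The map α_{k,p} : B_Z^{F²} → B_Z^{F²} defined by (i,j,[0)) ↦ (ki, kj, [0)) and (i,j,[1)) ↦ (p+ki, p+kj, [1)) for i, j ∈ ℤ is an injective endomorphism of B_Z^{F²}. -/
/-- The map `α_{k,p}` on `B_Z^{F²}`. -/
def alphaMap (k p : ℤ) (x : BZF) : BZF :=
  if x.2.2 = 0 then (k * x.1, k * x.2.1, 0) else (p + k * x.1, p + k * x.2.1, 1)

set_option maxHeartbeats 1000000 in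
/-- For a positive integer `k` and `p ∈ {0,…,k-1}`, `α_{k,p}` is an injective
endomorphism of `B_Z^{F²}`. -/
theorem alphaMap_injective_endomorphism (k p : ℤ)
    (hk : 0 < k) (hp0 : 0 ≤ p) (hpk : p < k) :
    Function.Injective (alphaMap k p) ∧ IsHom (alphaMap k p) := by
  constructor
  · intro a b hab
    obtain ⟨x1, x2, x3⟩ := a
    obtain ⟨y1, y2, y3⟩ := b
    fin_cases x3 <;> fin_cases y3 <;>
      simp only [alphaMap] at hab <;>
      norm_num [Prod.ext_iff] at hab <;> norm_num [Prod.ext_iff] <;>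
      exact ⟨hab.1.resolve_right hk.ne', hab.2.resolve_right hk.ne'⟩
  · intro x y
    obtain ⟨i1, j1, f1⟩ := x
    obtain ⟨i2, j2, f2⟩ := y
    have l0 : k * i2 ≤ k * j1 ↔ i2 ≤ j1 := mul_le_mul_iff_right₀ hk
    have l1 : k * j1 ≤ k * i2 ↔ j1 ≤ i2 := mul_le_mul_iff_right₀ hk
    have l2 : k * j1 + k ≤ k * i2 ↔ j1 + 1 ≤ i2 := by
      rw [show k * j1 + k = k * (j1 + 1) by ring]; exact mul_le_mul_iff_right₀ hk
    have l3 : k * i2 + k ≤ k * j1 ↔ i2 + 1 ≤ j1 := by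
      rw [show k * i2 + k = k * (i2 + 1) by ring]; exact mul_le_mul_iff_right₀ hk
    have e1 : k * (i1 - j1 + i2) = k * i1 - k * j1 + k * i2 := by ring
    have e2 : k * (j1 - i2 + j2) = k * j1 - k * i2 + k * j2 := by ring
    rcases le_or_gt j1 i2 with h | h
    · fin_cases f1 <;> fin_cases f2 <;>
        simp only [bzMul, alphaMap, famOfInt] <;>
        norm_num [h] <;>
        rw [e1] <;>
        revert l0 l1 l2 l3 h <;>
        generalize k * i1 = A <;>
        generalize k * j1 = B <;>
        generalize k * i2 = C <;>
        generalize k * j2 = D <;>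
        intro l0 l1 l2 l3 h <;>
        split_ifs <;>
        simp_all [Prod.ext_iff, Fin.ext_iff] <;>
        omega
    · fin_cases f1 <;> fin_cases f2 <;>
        simp only [bzMul, alphaMap, famOfInt] <;>
        norm_num [h.not_ge, h] <;>
        rw [e2] <;>
        revert l0 l1 l2 l3 h <;>
        generalize k * i1 = A <;>
        generalize k * j1 = B <;>
        generalize k * i2 = C <;>
        generalize k * j2 = D <;>
        intro l0 l1 l2 l3 h <;>
        split_ifs <;>
        simp_all [Prod.ext_iff, Fin.ext_iff] <;>
        omega
end

section
/- Fix an integer k ≥ 2 and p ∈ {1, …, k−1}. The map β_{k,p} : B_Z^{F²} → B_Z^{F²} defined by (i,j,[0)) ↦ (ki, kj, [0)) and (i,j,[1)) ↦ (p+ki, p+kj, [0)) for i, j ∈ ℤ is an injective endomorphism of B_Z^{F²}. -/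
/-- The map `β_{k,p}` on `B_Z^{F²}`. -/
def betaMap (k p : ℤ) (x : BZF) : BZF :=
  if x.2.2 = 0 then (k * x.1, k * x.2.1, 0) else (p + k * x.1, p + k * x.2.1, 0)

set_option maxHeartbeats 1000000 in
/-- For an integer `k ≥ 2` and `p ∈ {1,…,k-1}`, `β_{k,p}` is an injective
endomorphism of `B_Z^{F²}`. -/
theorem betaMap_injective_endomorphism (k p : ℤ)
    (hk : 2 ≤ k) (hp1 : 1 ≤ p) (hpk : p < k) :
    Function.Injective (betaMap k p) ∧ IsHom (betaMap k p) := by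
  constructor
  · rintro ⟨i1, j1, f1⟩ ⟨i2, j2, f2⟩ h
    have hdvd : ∀ a b : ℤ, k * a = p + k * b → False := by
      intro a b hab
      have hd : k ∣ p := ⟨a - b, by linarith [mul_sub k a b]⟩
      have := Int.le_of_dvd (by omega) hd
      omega
    fin_cases f1 <;> fin_cases f2 <;>
      simp only [betaMap, Prod.ext_iff] at h ⊢ <;> norm_num at h ⊢
    · omega
    · exact hdvd _ _ h.1
    · exact hdvd _ _ h.1.symm
    · omega
  · rintro ⟨i1, j1, f1⟩ ⟨i2, j2, f2⟩
    have e1 : k * (i1 - j1 + i2) = k * i1 - k * j1 + k * i2 := by ring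
    have e2 : k * (j1 - i2 + j2) = k * j1 - k * i2 + k * j2 := by ring
    have h3 : j1 < i2 → k * j1 + k ≤ k * i2 := fun h => by nlinarith
    have h4 : i2 < j1 → k * i2 + k ≤ k * j1 := fun h => by nlinarith
    have h5 : j1 ≤ i2 → k * j1 ≤ k * i2 := fun h => by nlinarith
    have h6 : i2 ≤ j1 → k * i2 ≤ k * j1 := fun h => by nlinarith
    fin_cases f1 <;> fin_cases f2 <;>
      simp only [bzMul, betaMap, famOfInt] <;> norm_num <;>
      split_ifs <;> simp_all [Prod.ext_iff] <;> omega
end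

section
/- If e is an endomorphism of B_Z^{F²} with (0,0,[0))e = (0,0,[0)), then there exists a non-negative integer n such that (i,j,[0))e = (ni, nj, [0)) for all i, j ∈ ℤ. -/
lemma famOfInt_zero_iff (v : ℤ) : famOfInt v = 0 ↔ v ≤ 0 := by
  unfold famOfInt; split_ifs with h <;> simp [h]

lemma fin2_eq_zero (φ : Fin 2) (h : ((φ:ℕ):ℤ) ≤ 0) : φ = 0 := by
  fin_cases φ <;> simp_all

lemma pm1 (a : ℤ) : bzMul (a,0,(0:Fin 2)) (0,0,(0:Fin 2)) = (a,0,(0:Fin 2)) := by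
  simp [bzMul, famOfInt]
lemma pm2 (a : ℤ) : bzMul ((0:ℤ),(0:ℤ),(0:Fin 2)) (0,a,(0:Fin 2)) = ((0:ℤ),a,(0:Fin 2)) := by
  simp [bzMul, famOfInt]
lemma pm3 (a : ℤ) : bzMul ((0:ℤ),a,(0:Fin 2)) (a,0,(0:Fin 2)) = ((0:ℤ),(0:ℤ),(0:Fin 2)) := by
  simp [bzMul, famOfInt]
lemma pm4 (a b : ℤ) : bzMul (a,0,(0:Fin 2)) (0,b,(0:Fin 2)) = (a,b,(0:Fin 2)) := by
  simp [bzMul, famOfInt]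
lemma pm5 (a : ℤ) (ha : 0 ≤ a) : bzMul ((1:ℤ),0,(0:Fin 2)) (a,0,(0:Fin 2)) = (1+a,0,(0:Fin 2)) := by
  simp [bzMul, famOfInt, ha]
lemma pm6 (a : ℤ) (ha : a ≤ 0) : bzMul (a,a,(0:Fin 2)) ((0:ℤ),(0:ℤ),(0:Fin 2)) = ((0:ℤ),(0:ℤ),(0:Fin 2)) := by
  simp [bzMul, famOfInt, ha]
lemma pm7 : bzMul ((0:ℤ),(0:ℤ),(1:Fin 2)) ((0:ℤ),(0:ℤ),(1:Fin 2)) = ((0:ℤ),(0:ℤ),(1:Fin 2)) := by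
  simp [bzMul, famOfInt]
lemma pm8 : bzMul ((0:ℤ),(0:ℤ),(1:Fin 2)) ((0:ℤ),(0:ℤ),(0:Fin 2)) = ((0:ℤ),(0:ℤ),(1:Fin 2)) := by
  simp [bzMul, famOfInt]
lemma pm9 (a : ℤ) (ha : a ≤ 0) : bzMul ((0:ℤ),(0:ℤ),(1:Fin 2)) (a,0,(0:Fin 2)) = bzMul ((0:ℤ),(0:ℤ),(1:Fin 2)) ((0:ℤ),-a,(0:Fin 2)) := by
  rcases eq_or_lt_of_le ha with h | h
  · subst h; norm_num
  · simp [bzMul, famOfInt, not_le.mpr h]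

/-- A `(0,0,[0))`-endomorphism of `B_Z^{F²}` acts on the `[0)`-layer as
`(i,j,[0)) ↦ (ni,nj,[0))` for some non-negative integer `n`. -/
theorem endo_fixing_c0_on_zero_layer (e : BZF → BZF)
    (he : IsHom e) (h0 : e c0 = c0) :
    ∃ n : ℕ, ∀ i j : ℤ, e (i, j, (0 : Fin 2)) = ((n : ℤ) * i, (n : ℤ) * j, (0 : Fin 2)) := by
  have h0' : e ((0:ℤ), (0:ℤ), (0:Fin 2)) = ((0:ℤ), (0:ℤ), (0:Fin 2)) := h0
  -- Step 1: shape of e on (i,0) and (0,i)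
  have key : ∀ i : ℤ, ∃ p : ℤ,
      e (i, 0, (0:Fin 2)) = (p, 0, 0) ∧ e ((0:ℤ), i, (0:Fin 2)) = (0, p, 0) := by
    intro i
    rcases h1 : e (i, 0, (0:Fin 2)) with ⟨x1, x2, φ⟩
    rcases h2 : e ((0:ℤ), i, (0:Fin 2)) with ⟨y1, y2, ψ⟩
    have e1 := he (i, 0, 0) (0, 0, 0)
    rw [pm1, h1, h0'] at e1
    have hx2 : 0 ≤ x2 := by
      simp only [bzMul] at e1
      split_ifs at e1 with hc
      · simp [Prod.ext_iff] at e1; omega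
      · simp at hc; omega
    have e2 := he ((0:ℤ), 0, 0) ((0:ℤ), i, 0)
    rw [pm2, h2, h0'] at e2
    have hy1 : 0 ≤ y1 := by
      simp only [bzMul] at e2
      split_ifs at e2 with hc
      · omega
      · simp [Prod.ext_iff] at e2; omega
    have e3 := he ((0:ℤ), i, 0) (i, 0, 0)
    rw [pm3, h0', h1, h2] at e3
    -- e3 : (0,0,0) = bzMul (y1,y2,ψ) (x1,x2,φ)
    simp only [bzMul] at e3
    split_ifs at e3 with hc
    · simp only [Prod.ext_iff, Prod.mk.injEq] at e3
      simp at e3 hc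
      obtain ⟨g1, g2, g3⟩ := e3
      rw [eq_comm, famOfInt_zero_iff] at g3
      simp [max_le_iff] at g3
      have hφ : φ = 0 := by
        have h := g3.2
        exact Fin.ext (by simpa using h)
      have hψ : ψ = 0 := fin2_eq_zero _ (by omega)
      have hx2' : x2 = 0 := by omega
      have hy2 : y2 = x1 := by omega
      have hy1' : y1 = 0 := by omega
      exact ⟨x1, by rw [hx2', hφ], by rw [hy1', hy2, hψ]⟩
    · simp [Prod.ext_iff] at e3 hc; omega
  choose P hP1 hP2 using key
  have hP0 : P 0 = 0 := by
    have h := hP1 0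
    rw [h0'] at h
    simp [Prod.ext_iff] at h
    omega
  -- Step 2: general formula
  have hE : ∀ i j : ℤ, e (i, j, (0:Fin 2)) = (P i, P j, (0:Fin 2)) := by
    intro i j
    have := he (i, 0, 0) ((0:ℤ), j, 0)
    rw [pm4, hP1, hP2] at this
    rw [this, pm4]
  -- Step 3: positive side, linearity and nonnegativity
  have hpos : ∀ i : ℤ, 0 ≤ i → 0 ≤ P i ∧ P (1 + i) = P 1 + P i := by
    intro i hi
    have := he ((1:ℤ), 0, 0) (i, 0, 0)
    rw [pm5 i hi, hP1, hP1, hP1] at this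
    simp only [bzMul] at this
    split_ifs at this with hc
    · simp only [Prod.ext_iff, Prod.mk.injEq] at this
      simp at this hc
      exact ⟨hc, by omega⟩
    · simp [Prod.ext_iff] at this hc; omega
  have hlinN : ∀ n : ℕ, P (n : ℤ) = (n : ℤ) * P 1 := by
    intro n
    induction n with
    | zero => simpa using hP0
    | succ k ih =>
        have hh := (hpos (k : ℤ) (Int.natCast_nonneg k)).2
        push_cast
        rw [show ((k:ℤ) + 1) = 1 + (k:ℤ) by ring, hh, ih]
        ring
  have hlin : ∀ i : ℤ, 0 ≤ i → P i = i * P 1 := by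
    intro i hi
    obtain ⟨n, rfl⟩ := Int.eq_ofNat_of_zero_le hi
    exact hlinN n
  -- Step 4: negative side is ≤ 0
  have hneg : ∀ i : ℤ, i ≤ 0 → P i ≤ 0 := by
    intro i hi
    have := he (i, i, 0) ((0:ℤ), 0, 0)
    rw [pm6 i hi, h0', hE i i] at this
    simp only [bzMul] at this
    split_ifs at this with hc
    · omega
    · simp [Prod.ext_iff] at this; omega
  -- Step 5: the image of (0,0,[1)) is an idempotent (r,r,φ) with r ≥ 0
  rcases hD : e ((0:ℤ), (0:ℤ), (1:Fin 2)) with ⟨r1, r2, φ⟩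
  have eD := he ((0:ℤ), 0, 1) ((0:ℤ), 0, 1)
  rw [pm7, hD] at eD
  have hr : r2 = r1 := by
    simp only [bzMul] at eD
    split_ifs at eD with hc
    · simp [Prod.ext_iff] at eD; omega
    · simp [Prod.ext_iff] at eD hc; omega
  subst hr
  have hrpos : 0 ≤ r2 := by
    have := he ((0:ℤ), 0, 1) ((0:ℤ), 0, 0)
    rw [pm8, hD, h0'] at this
    simp only [bzMul] at this
    split_ifs at this with hc
    · simp [Prod.ext_iff] at this; omega
    · simp at hc; omega
  -- Step 6: P (-i) = - P i for i ≤ 0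
  have hmir : ∀ i : ℤ, i ≤ 0 → P i = - P (-i) := by
    intro i hi
    have := he ((0:ℤ), 0, 1) (i, 0, 0)
    rw [pm9 i hi, he ((0:ℤ), 0, 1) ((0:ℤ), -i, 0), hD, hP1, hP2] at this
    have hp : P i ≤ 0 := hneg i hi
    have hq : 0 ≤ P (-i) := (hpos (-i) (by omega)).1
    simp only [bzMul] at this
    split_ifs at this with hc1 hc2 hc2 <;>
      simp [Prod.ext_iff] at this hc1 hc2 <;> omega
  -- Conclusion
  have hP1nn : 0 ≤ P 1 := (hpos 1 (by norm_num)).1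
  refine ⟨(P 1).toNat, ?_⟩
  intro i j
  have hall : ∀ k : ℤ, P k = P 1 * k := by
    intro k
    rcases le_or_gt 0 k with hk | hk
    · rw [hlin k hk]; ring
    · rw [hmir k hk.le, hlin (-k) (by omega)]; ring
  rw [hE, hall i, hall j, Int.toNat_of_nonneg hP1nn]
end

section
/- The map ã : B_Z^{F²} → B_Z^{F²} defined by (i, j, [q)) ↦ (i+q, j+q, [1−q)) for i, j ∈ ℤ and q ∈ {0,1} is an automorphism of B_Z^{F²}, and ã² = h₁, where h₁ is the shift automorphism (i,j,[q)) ↦ (i+1, j+1, [q)). -/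
/-- The shift map `h_s` on `B_Z^{F²}`. -/
def hMap (s : ℤ) (x : BZF) : BZF := (x.1 + s, x.2.1 + s, x.2.2)


/-- The map `ã` on `B_Z^{F²}`: `(i,j,[q)) ↦ (i+q, j+q, [1-q))`. -/
def aTilde (x : BZF) : BZF :=
  (x.1 + ((x.2.2 : ℕ) : ℤ), x.2.1 + ((x.2.2 : ℕ) : ℤ), 1 - x.2.2)

theorem aTilde_sq (x : BZF) : aTilde (aTilde x) = hMap 1 x := by
  obtain ⟨i, j, q⟩ := x
  fin_cases q <;> simp [aTilde, hMap]

theorem aTilde_hom : IsHom aTilde := by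
  rintro ⟨i1, j1, q1⟩ ⟨i2, j2, q2⟩
  fin_cases q1 <;> fin_cases q2 <;>
    simp only [bzMul, aTilde, famOfInt, Fin.isValue, Fin.val_zero, Fin.val_one,
      Nat.cast_zero, Nat.cast_one] <;>
    norm_num <;>
    split_ifs <;>
    first
      | rfl
      | (simp only [Prod.mk.injEq] ; norm_num <;> omega)
      | omega

/-- `ã` is an automorphism of `B_Z^{F²}` and `ã² = h₁`. -/
theorem aTilde_automorphism_and_sq :
    IsHom aTilde ∧ Function.Bijective aTilde ∧
    (∀ x : BZF, aTilde (aTilde x) = hMap 1 x) := by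
  refine ⟨aTilde_hom, ?_, aTilde_sq⟩
  have hinv : Function.Bijective (hMap 1) := by
    constructor
    · rintro ⟨a,b,c⟩ ⟨d,e,f⟩ h
      simp [hMap, Prod.ext_iff] at h ⊢
      omega
    · rintro ⟨a,b,c⟩; exact ⟨(a-1,b-1,c), by simp [hMap]⟩
  have h2 : Function.Bijective (aTilde ∘ aTilde) := by
    have : aTilde ∘ aTilde = hMap 1 := funext aTilde_sq
    rw [this]; exact hinv
  exact ⟨Function.Injective.of_comp h2.1, Function.Surjective.of_comp h2.2⟩
end

section
/- Every injective endomorphism e of B_Z^{F²} is of the form e = e₀ ∘ a where a is an automorphism of B_Z^{F²} and e₀ = α_{k,p} for some positive integer k and p ∈ {0,…,k−1}, or e₀ = β_{k,p} for some integer k ≥ 2 and p ∈ {1,…,k−1}. -/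
namespace BZFaux

def code (x : BZF) : ℤ × ℤ := (2*x.1 + ((x.2.2 : ℕ) : ℤ), 2*x.2.1 + ((x.2.2 : ℕ) : ℤ))
def cmul (u v : ℤ × ℤ) : ℤ × ℤ := (u.1 + max (v.1 - u.2) 0, v.2 + max (u.2 - v.1) 0)
def decode (M N : ℤ) : BZF := if M % 2 = 0 then (M/2, N/2, 0) else ((M-1)/2, (N-1)/2, 1)

lemma fam_cast (v : ℤ) : ((famOfInt v : ℕ) : ℤ) = if v ≤ 0 then 0 else 1 := by
  unfold famOfInt; split_ifs <;> simp

lemma code_inj : Function.Injective code := by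
  rintro ⟨i,j,q⟩ ⟨i',j',q'⟩ h
  simp only [code, Prod.mk.injEq] at h
  fin_cases q <;> fin_cases q' <;> simp_all <;> omega

lemma code_par (x : BZF) : (code x).1 % 2 = (code x).2 % 2 := by
  obtain ⟨i,j,q⟩ := x; simp only [code]; omega

lemma code_decode {M N : ℤ} (h : M % 2 = N % 2) : code (decode M N) = (M, N) := by
  unfold decode; split_ifs with h0 <;> simp [code, Prod.ext_iff] <;> omega

lemma code_mul (x y : BZF) : code (bzMul x y) = cmul (code x) (code y) := by
  obtain ⟨i₁, j₁, q₁⟩ := x; obtain ⟨i₂, j₂, q₂⟩ := y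
  fin_cases q₁ <;> fin_cases q₂ <;>
    (simp only [bzMul]; split_ifs <;> simp_all [code, cmul, fam_cast, Prod.ext_iff] <;> omega)

def Ee (m : ℤ) : BZF := decode m m

lemma code_E (m : ℤ) : code (Ee m) = (m, m) := code_decode rfl

lemma E_inj : Function.Injective Ee := by
  intro m n h
  have := congrArg code h
  rw [code_E, code_E] at this
  exact (Prod.mk.injEq _ _ _ _).mp this |>.1

lemma hEE (m n : ℤ) : bzMul (Ee m) (Ee n) = Ee (max m n) := by
  apply code_inj
  rw [code_mul, code_E, code_E, code_E]
  simp [cmul, Prod.ext_iff]; constructor <;> omega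

def shMap (c : ℤ) (x : BZF) : BZF := decode ((code x).1 + c) ((code x).2 + c)

lemma code_sh (c : ℤ) (x : BZF) : code (shMap c x) = ((code x).1 + c, (code x).2 + c) :=
  code_decode (by have := code_par x; omega)

lemma sh_hom (c : ℤ) : IsHom (shMap c) := by
  intro x y
  apply code_inj
  rw [code_sh, code_mul, code_mul, code_sh, code_sh]
  simp [cmul, Prod.ext_iff]
  constructor <;> omega

lemma sh_bij (c : ℤ) : Function.Bijective (shMap c) := by
  refine Function.bijective_iff_has_inverse.mpr ⟨shMap (-c), fun x => ?_, fun x => ?_⟩ <;>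
    · apply code_inj
      rw [code_sh, code_sh]
      simp [Prod.ext_iff]

end BZFaux

open BZFaux

/-- Every injective endomorphism of `B_Z^{F²}` is `e₀ ∘ a` with `a` an automorphism
and `e₀` equal to some `α_{k,p}` or some `β_{k,p}`. -/
theorem injective_endo_classification (e : BZF → BZF)
    (he : IsHom e) (hinj : Function.Injective e) :
    ∃ e₀ a : BZF → BZF,
      IsHom a ∧ Function.Bijective a ∧
      (∀ x : BZF, e x = a (e₀ x)) ∧
      ((∃ k p : ℤ, 0 < k ∧ 0 ≤ p ∧ p < k ∧ e₀ = alphaMap k p) ∨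
       (∃ k p : ℤ, 2 ≤ k ∧ 1 ≤ p ∧ p < k ∧ e₀ = betaMap k p)) := by
  -- e sends idempotents to idempotents, giving σ
  have hsig : ∀ m : ℤ, ∃ s : ℤ, e (Ee m) = Ee s := by
    intro m
    have hid : bzMul (Ee m) (Ee m) = Ee m := by rw [hEE]; simp
    have h : e (Ee m) = bzMul (e (Ee m)) (e (Ee m)) := by
      conv_lhs => rw [← hid]
      exact he _ _
    refine ⟨(code (e (Ee m))).1, ?_⟩
    apply code_inj
    rw [code_E]
    have h2 := congrArg code h
    rw [code_mul] at h2
    rcases hc : code (e (Ee m)) with ⟨P, Q⟩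
    rw [hc] at h2
    simp [cmul, Prod.ext_iff] at h2 ⊢
    omega
  choose σ hσ using hsig
  -- the key structural fact: e acts coordinatewise via σ on codes
  have hcode_e : ∀ x : BZF, code (e x) = (σ (code x).1, σ (code x).2) := by
    intro x
    rcases hc : code x with ⟨M, N⟩
    have hpar : M % 2 = N % 2 := by have := code_par x; rw [hc] at this; exact this
    have hcx' : code (decode N M) = (N, M) := code_decode hpar.symm
    have h1 : bzMul x (decode N M) = Ee M := by
      apply code_inj; rw [code_mul, hc, hcx', code_E]
      simp [cmul, Prod.ext_iff]; try omega
    have h2 : bzMul (decode N M) x = Ee N := by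
      apply code_inj; rw [code_mul, hc, hcx', code_E]
      simp [cmul, Prod.ext_iff]; try omega
    have h3 : bzMul (bzMul x (decode N M)) x = x := by
      apply code_inj; rw [code_mul, code_mul, hc, hcx']
      simp [cmul, Prod.ext_iff]; try omega
    have h4 : bzMul (bzMul (decode N M) x) (decode N M) = decode N M := by
      apply code_inj; rw [code_mul, code_mul, hc, hcx']
      simp [cmul, Prod.ext_iff]; try omega
    have e1 : Ee (σ M) = bzMul (e x) (e (decode N M)) := by
      rw [← hσ, ← h1]; exact he _ _
    have e2 : Ee (σ N) = bzMul (e (decode N M)) (e x) := by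
      rw [← hσ, ← h2]; exact he _ _
    have e3 : bzMul (bzMul (e x) (e (decode N M))) (e x) = e x := by
      rw [← he, ← he, h3]
    have e4 : bzMul (bzMul (e (decode N M)) (e x)) (e (decode N M)) = e (decode N M) := by
      rw [← he, ← he, h4]
    rcases hpq : code (e x) with ⟨P, Q⟩
    rcases hpq' : code (e (decode N M)) with ⟨P', Q'⟩
    have E1 := congrArg code e1
    rw [code_E, code_mul, hpq, hpq'] at E1
    have E2 := congrArg code e2
    rw [code_E, code_mul, hpq, hpq'] at E2
    have E3 := congrArg code e3
    rw [code_mul, code_mul, hpq, hpq'] at E3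
    have E4 := congrArg code e4
    rw [code_mul, code_mul, hpq, hpq'] at E4
    simp only [cmul, Prod.mk.injEq] at E1 E2 E3 E4 ⊢
    constructor <;> omega
  -- monotonicity and injectivity of σ
  have hσmax : ∀ m n : ℤ, σ (max m n) = max (σ m) (σ n) := by
    intro m n
    have h := he (Ee m) (Ee n)
    rw [hEE, hσ, hσ, hσ, hEE] at h
    exact E_inj h
  have hσmono : ∀ m n : ℤ, m ≤ n → σ m ≤ σ n := by
    intro m n h
    have h2 := hσmax m n
    rw [max_eq_right h] at h2
    omega
  have hσinj : ∀ m n : ℤ, σ m = σ n → m = n := by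
    intro m n h
    exact E_inj (hinj ((hσ m).trans (h ▸ (hσ n).symm)))
  have hσparity : ∀ M N : ℤ, M % 2 = N % 2 → σ M % 2 = σ N % 2 := by
    intro M N h
    have h2 := code_par (e (decode M N))
    rw [hcode_e, code_decode h] at h2
    exact h2
  -- the functional equation
  have funEq : ∀ d x m : ℤ, 0 ≤ d → x % 2 = m % 2 →
      σ (x + d) = σ x + σ (m + d) - σ m := by
    intro d x m hd hpar
    have hu : code (decode x m) = (x, m) := code_decode hpar
    have hv : code (Ee (m+d)) = (m+d, m+d) := code_E _
    have hprod : code (bzMul (decode x m) (Ee (m+d))) = (x + d, m + d) := by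
      rw [code_mul, hu, hv]
      simp [cmul, Prod.ext_iff]; omega
    have h := congrArg code (he (decode x m) (Ee (m+d)))
    rw [hcode_e, hprod, code_mul, hcode_e, hcode_e, hu, hv] at h
    have hm := hσmono m (m+d) (by omega)
    simp only [cmul, Prod.mk.injEq] at h
    omega
  have hstep0 : ∀ x : ℤ, x % 2 = 0 → σ (x+1) = σ x + (σ 1 - σ 0) := by
    intro x h
    have h2 := funEq 1 x 0 (by omega) (by omega)
    rw [show (0:ℤ)+1 = 1 by norm_num] at h2
    omega
  have hstep1 : ∀ x : ℤ, x % 2 = 1 → σ (x+1) = σ x + (σ 2 - σ 1) := by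
    intro x h
    have h2 := funEq 1 x 1 (by omega) (by omega)
    rw [show (1:ℤ)+1 = 2 by norm_num] at h2
    omega
  -- closed form for σ
  have hval : ∀ i : ℤ, σ (2*i) = σ 0 + (σ 2 - σ 0) * i ∧
      σ (2*i+1) = σ 0 + (σ 2 - σ 0) * i + (σ 1 - σ 0) := by
    intro i
    induction i using Int.induction_on with
    | zero => norm_num
    | succ i ih =>
      have h1 := hstep1 (2*(i:ℤ)+1) (by omega)
      have h2 := hstep0 (2*((i:ℤ)+1)) (by omega)
      have hA : σ (2*((i:ℤ)+1)) = σ 0 + (σ 2 - σ 0) * ((i:ℤ)+1) := by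
        rw [show 2*((i:ℤ)+1) = (2*(i:ℤ)+1)+1 by ring, h1]
        linear_combination ih.2
      exact ⟨hA, by rw [h2]; linear_combination hA⟩
    | pred i ih =>
      have h1 := hstep0 (2*(-(i:ℤ)-1)) (by omega)
      have h2 := hstep1 (2*(-(i:ℤ)-1)+1) (by omega)
      rw [show (2*(-(i:ℤ)-1)+1)+1 = 2 * -(i:ℤ) by ring] at h2
      have hA : σ (2*(-(i:ℤ)-1)) = σ 0 + (σ 2 - σ 0) * (-(i:ℤ)-1) := by
        linear_combination ih.1 - h2 - h1
      exact ⟨hA, by rw [h1]; linear_combination hA⟩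
  -- the parameters
  have ha1 : 1 ≤ σ 1 - σ 0 := by
    have h2 := hσmono 0 1 (by omega)
    have h3 : σ 0 ≠ σ 1 := fun h => by have := hσinj 0 1 h; omega
    omega
  have hb1 : 1 ≤ σ 2 - σ 1 := by
    have h2 := hσmono 1 2 (by omega)
    have h3 : σ 1 ≠ σ 2 := fun h => by have := hσinj 1 2 h; omega
    omega
  have heven : (σ 2 - σ 0) % 2 = 0 := by
    have := hσparity 0 2 (by norm_num)
    omega
  obtain ⟨k, hk⟩ : ∃ k : ℤ, σ 2 - σ 0 = 2 * k := ⟨(σ 2 - σ 0)/2, by omega⟩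
  have hk1 : 1 ≤ k := by omega
  by_cases hodd : (σ 1 - σ 0) % 2 = 1
  · -- α case
    obtain ⟨p, hp⟩ : ∃ p : ℤ, σ 1 - σ 0 = 2*p + 1 := ⟨(σ 1 - σ 0 - 1)/2, by omega⟩
    refine ⟨alphaMap k p, shMap (σ 0), sh_hom _, sh_bij _, ?_,
      Or.inl ⟨k, p, by omega, by omega, by omega, rfl⟩⟩
    intro x
    apply code_inj
    rw [hcode_e, code_sh]
    obtain ⟨i, j, q⟩ := x
    have h1 : σ (2*i) = σ 0 + 2*(k*i) := by linear_combination (hval i).1 + i * hk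
    have h2 : σ (2*j) = σ 0 + 2*(k*j) := by linear_combination (hval j).1 + j * hk
    have h3 : σ (2*i+1) = σ 0 + 2*(k*i) + 2*p + 1 := by
      linear_combination (hval i).2 + i * hk + hp
    have h4 : σ (2*j+1) = σ 0 + 2*(k*j) + 2*p + 1 := by
      linear_combination (hval j).2 + j * hk + hp
    fin_cases q <;>
      simp [code, alphaMap, Prod.ext_iff] <;>
      constructor <;> linarith
  · -- β case
    obtain ⟨p, hp⟩ : ∃ p : ℤ, σ 1 - σ 0 = 2*p := ⟨(σ 1 - σ 0)/2, by omega⟩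
    have hpk : p < k := by omega
    have hp1 : 1 ≤ p := by omega
    refine ⟨betaMap k p, shMap (σ 0), sh_hom _, sh_bij _, ?_,
      Or.inr ⟨k, p, by omega, hp1, hpk, rfl⟩⟩
    intro x
    apply code_inj
    rw [hcode_e, code_sh]
    obtain ⟨i, j, q⟩ := x
    have h1 : σ (2*i) = σ 0 + 2*(k*i) := by linear_combination (hval i).1 + i * hk
    have h2 : σ (2*j) = σ 0 + 2*(k*j) := by linear_combination (hval j).1 + j * hk
    have h3 : σ (2*i+1) = σ 0 + 2*(k*i) + 2*p := by
      linear_combination (hval i).2 + i * hk + hp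
    have h4 : σ (2*j+1) = σ 0 + 2*(k*j) + 2*p := by
      linear_combination (hval j).2 + j * hk + hp
    fin_cases q <;>
      simp [code, betaMap, Prod.ext_iff] <;>
      constructor <;> linarith
end

section
/- For any integer k, the set B_Z^{F²}(k,k,0) = (k,k,[0)) · B_Z^{F²} · (k,k,[0)) is a subsemigroup of B_Z^{F²} isomorphic to B_ω^{F²}. -/
/-- The subsemigroup `B_Z^{F²}(k,k,0) = (k,k,[0)) ⬝ B_Z^{F²} ⬝ (k,k,[0))`. -/
def Sk (k : ℤ) : Set BZF :=
  {z | ∃ x : BZF, z = bzMul (bzMul ((k, k, (0 : Fin 2)) : BZF) x) ((k, k, (0 : Fin 2)) : BZF)}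


/-- Elements of `B_ω^{F²}`. -/
abbrev BWF : Type := ℕ × ℕ × Fin 2

/-- The semigroup operation on `B_ω^{F²}`. -/
def bwMul (x y : BWF) : BWF :=
  if x.2.1 ≤ y.1 then
    (x.1 + (y.1 - x.2.1), y.2.1,
      famOfInt (max (max (((x.2.2 : ℕ) : ℤ) + (x.2.1 : ℤ) - (y.1 : ℤ)) 0) ((y.2.2 : ℕ) : ℤ)))
  else
    (x.1, x.2.1 - y.1 + y.2.1,
      famOfInt (max ((x.2.2 : ℕ) : ℤ) (max (((y.2.2 : ℕ) : ℤ) + (y.1 : ℤ) - (x.2.1 : ℤ)) 0)))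

lemma famOfInt_cast_s16 (r : Fin 2) : famOfInt ((r : ℕ) : ℤ) = r := by
  fin_cases r <;> simp [famOfInt]

lemma famL (t : ℤ) (r : Fin 2) (ht : t ≤ 0) :
    famOfInt (max (max t 0) ((r : ℕ) : ℤ)) = r := by
  have : max (max t 0) ((r : ℕ) : ℤ) = ((r : ℕ) : ℤ) := by omega
  rw [this, famOfInt_cast_s16]

lemma famR (t : ℤ) (r : Fin 2) (ht : t ≤ 0) :
    famOfInt (max ((r : ℕ) : ℤ) (max t 0)) = r := by
  have : max ((r : ℕ) : ℤ) (max t 0) = ((r : ℕ) : ℤ) := by omega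
  rw [this, famOfInt_cast_s16]

lemma Sk_mem (k : ℤ) (z : BZF) : z ∈ Sk k ↔ k ≤ z.1 ∧ k ≤ z.2.1 := by
  constructor
  · rintro ⟨⟨i, j, q⟩, rfl⟩
    by_cases h1 : k ≤ i <;>
      simp only [bzMul, h1, if_true, if_false] <;>
      split_ifs <;> constructor <;> simp only <;> omega
  · rintro ⟨h1, h2⟩
    obtain ⟨a, b, r⟩ := z
    simp only at h1 h2
    refine ⟨(a, b, r), ?_⟩
    have e1 : bzMul ((k, k, (0 : Fin 2)) : BZF) (a, b, r) = (a, b, r) := by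
      simp only [bzMul, h1, if_true]
      refine Prod.ext (by ring) (Prod.ext rfl ?_)
      exact famL _ r (by simp; omega)
    rw [e1]
    by_cases h3 : b ≤ k
    · have hbk : b = k := le_antisymm h3 h2
      subst hbk
      simp only [bzMul, le_refl, if_true]
      have h4 : a - b + b = a := by ring
      have h5 : max (max (((r:ℕ):ℤ) + b - b) 0) ((((0:Fin 2)):ℕ):ℤ) = ((r:ℕ):ℤ) := by
        simp only [Fin.val_zero, Nat.cast_zero]
        omega
      rw [h4, h5, famOfInt_cast_s16]
    · simp only [bzMul, h3, if_false]
      have h4 : b - k + k = b := by ring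
      have h5 : max (((r:ℕ):ℤ)) (max (((((0:Fin 2)):ℕ):ℤ) + k - b) 0) = ((r:ℕ):ℤ) := by
        simp only [Fin.val_zero, Nat.cast_zero]
        omega
      rw [h4, h5, famOfInt_cast_s16]


/-- For any integer `k`, `B_Z^{F²}(k,k,0)` is a subsemigroup of `B_Z^{F²}`
isomorphic to `B_ω^{F²}`. -/
theorem Sk_subsemigroup_iso_BW (k : ℤ) :
    (∀ a ∈ Sk k, ∀ b ∈ Sk k, bzMul a b ∈ Sk k) ∧
    ∃ φ : Sk k → BWF, Function.Bijective φ ∧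
      ∀ (a b : Sk k) (h : bzMul (a : BZF) (b : BZF) ∈ Sk k),
        φ ⟨bzMul (a : BZF) (b : BZF), h⟩ = bwMul (φ a) (φ b) := by
  constructor
  · intro a ha b hb
    rw [Sk_mem] at *
    obtain ⟨ha1, ha2⟩ := ha
    obtain ⟨hb1, hb2⟩ := hb
    unfold bzMul
    split_ifs <;> constructor <;> dsimp only <;> omega
  · refine ⟨fun z => ((z.1.1 - k).toNat, (z.1.2.1 - k).toNat, z.1.2.2), ?_, ?_⟩
    · rw [Function.bijective_iff_has_inverse]
      refine ⟨fun w => ⟨(k + (w.1 : ℤ), k + (w.2.1 : ℤ), w.2.2),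
        (Sk_mem k _).2 ⟨by simp, by simp⟩⟩, ?_, ?_⟩
      · rintro ⟨⟨a, b, r⟩, hz⟩
        rw [Sk_mem] at hz
        obtain ⟨h1, h2⟩ := hz
        simp only at h1 h2
        apply Subtype.ext
        simp only
        refine Prod.ext ?_ (Prod.ext ?_ rfl) <;> simp <;> omega
      · rintro ⟨a, b, r⟩
        simp
    · rintro ⟨⟨a1, b1, r1⟩, ha⟩ ⟨⟨a2, b2, r2⟩, hb⟩ h
      rw [Sk_mem] at ha hb
      obtain ⟨ha1, ha2⟩ := ha
      obtain ⟨hb1, hb2⟩ := hb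
      simp only at ha1 ha2 hb1 hb2
      by_cases hc : b1 ≤ a2
      · have hc' : (b1 - k).toNat ≤ (a2 - k).toNat := by omega
        simp only [bzMul, bwMul, hc, hc', if_true]
        refine Prod.ext ?_ (Prod.ext rfl ?_) <;> dsimp only
        · omega
        · congr 1
          omega
      · have hc' : ¬ ((b1 - k).toNat ≤ (a2 - k).toNat) := by omega
        simp only [bzMul, bwMul, hc, hc', if_false]
        refine Prod.ext rfl (Prod.ext ?_ ?_) <;> dsimp only
        · omega
        · congr 1
          omega
end
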